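/- Fix S > 0 and x ∈ (0,M). For death rates 0 < D ≤ D', writing p^{S,D}_n and p^{S,D} for the generation-wise extinction probabilities and their pointwise limit computed with death rate D, one has p^{S,D}_n(x) ≤ p^{S,D'}_n(x) for every n ≥ 0, and consequently p^{S,D}(x) ≤ p^{S,D'}(x); i.e. the extinction probability is non-decreasing in the death rate D. -/

import Mathlib

open MeasureTheory Set Filter

/-- Cumulative distribution function `F_x(u) = ∫_0^u q(x,α) dα` associated to a
division kernel. -/
noncomputable def cdf (q : ℝ → ℝ → ℝ) (x u : ℝ) : ℝ := ∫ α in (0:ℝ)..u, q x α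

/-- Generalized inverse `F_x^{-1}(v) = inf {u ∈ [0,1] : F_x(u) ≥ v}`. -/
noncomputable def cdfInv (q : ℝ → ℝ → ℝ) (x v : ℝ) : ℝ :=
  sInf {u ∈ Set.Icc (0:ℝ) 1 | v ≤ cdf q x u}

/-- A division kernel on `[0,M]`: measurable, nonnegative, a probability density in the
second variable, symmetric with respect to `1/2`. -/
def IsDivisionKernel (M : ℝ) (q : ℝ → ℝ → ℝ) : Prop :=
  Measurable (Function.uncurry q) ∧
  (∀ x ∈ Set.Icc (0:ℝ) M, ∀ α ∈ Set.Icc (0:ℝ) 1, 0 ≤ q x α) ∧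
  (∀ x ∈ Set.Icc (0:ℝ) M, (∫ α in (0:ℝ)..1, q x α) = 1) ∧
  (∀ x ∈ Set.Icc (0:ℝ) M, ∀ α ∈ Set.Icc (0:ℝ) 1, q x α = q x (1 - α))

/-- Assumption (Q): for all `u ∈ (0,1)` and `0 ≤ x ≤ y ≤ M`,
`x·F_x^{-1}(u) ≤ y·F_y^{-1}(u)` and `x·(1 − F_x^{-1}(u)) ≤ y·(1 − F_y^{-1}(u))`. -/
def AssumptionQ (M : ℝ) (q : ℝ → ℝ → ℝ) : Prop :=
  ∀ u ∈ Set.Ioo (0:ℝ) 1, ∀ x y : ℝ, 0 ≤ x → x ≤ y → y ≤ M →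
    x * cdfInv q x u ≤ y * cdfInv q y u ∧
    x * (1 - cdfInv q x u) ≤ y * (1 - cdfInv q y u)

/-- The right-hand side of the recurrence defining the generation-wise extinction
probabilities: for a function `f` (extinction probability at the previous generation),
`genRec D b A q f x = D ∫_0^∞ e^{−Dt} e^{−∫_0^t b(A_u(x))du} dt
 + ∫_0^∞ b(A_t(x)) e^{−∫_0^t b(A_u(x))du − Dt} (∫_0^1 q(A_t(x),α) f(αA_t(x)) f((1−α)A_t(x)) dα) dt`. -/
noncomputable def genRec (D : ℝ) (b : ℝ → ℝ) (A : ℝ → ℝ → ℝ) (q : ℝ → ℝ → ℝ)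
    (f : ℝ → ℝ) (x : ℝ) : ℝ :=
  D * (∫ t in Set.Ioi (0:ℝ),
        Real.exp (-(D * t)) * Real.exp (-(∫ u in (0:ℝ)..t, b (A u x))))
  + ∫ t in Set.Ioi (0:ℝ),
      b (A t x) * Real.exp (-(∫ u in (0:ℝ)..t, b (A u x)) - D * t) *
        ∫ α in (0:ℝ)..1, q (A t x) α * f (α * A t x) * f ((1 - α) * A t x)



lemma meas_indicator_of_monotoneOn {a b : ℝ} {f : ℝ → ℝ}
    (hf : MonotoneOn f (Set.Ioo a b)) :
    Measurable ((Set.Ioo a b).indicator f) := by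
  have key : ∀ c : ℝ, MeasurableSet {y | y ∈ Set.Ioo a b ∧ c < f y} := by
    intro c
    by_cases hne : {y | y ∈ Set.Ioo a b ∧ c < f y}.Nonempty
    · set S := {y | y ∈ Set.Ioo a b ∧ c < f y} with hS
      have hbd : BddBelow S := ⟨a, fun y hy => le_of_lt hy.1.1⟩
      set m := sInf S with hm
      have h1 : Set.Ioo a b ∩ Set.Ioi m ⊆ S := by
        rintro y ⟨hy, hym⟩
        obtain ⟨s, hsS, hsy⟩ := (csInf_lt_iff hbd hne).mp hym
        exact ⟨hy, lt_of_lt_of_le hsS.2 (hf hsS.1 hy hsy.le)⟩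
      have h2 : ∀ y ∈ S, m ≤ y := fun y hy => csInf_le hbd hy
      have hsplit : S = (Set.Ioo a b ∩ Set.Ioi m) ∪ (S ∩ {m}) := by
        apply subset_antisymm
        · intro y hy
          rcases eq_or_lt_of_le (h2 y hy) with h | h
          · exact Or.inr ⟨hy, h.symm⟩
          · exact Or.inl ⟨hy.1, h⟩
        · rintro y (h | h)
          · exact h1 h
          · exact h.1
      rw [hsplit]
      refine (measurableSet_Ioo.inter measurableSet_Ioi).union ?_
      exact Set.Subsingleton.measurableSet (fun u hu v hv => by
        rw [hu.2, hv.2])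
    · rw [Set.not_nonempty_iff_eq_empty] at hne
      rw [hne]; exact MeasurableSet.empty
  apply measurable_of_Ioi
  intro c
  by_cases hc : c < 0
  · have : (Set.Ioo a b).indicator f ⁻¹' Set.Ioi c
        = {y | y ∈ Set.Ioo a b ∧ c < f y} ∪ (Set.Ioo a b)ᶜ := by
      ext y
      by_cases hy : y ∈ Set.Ioo a b
      · simp only [Set.indicator_of_mem hy, Set.mem_preimage, Set.mem_Ioi,
          Set.mem_union, Set.mem_setOf_eq, Set.mem_compl_iff]
        tauto
      · simp only [Set.indicator_of_notMem hy, Set.mem_preimage, Set.mem_Ioi,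
          Set.mem_union, Set.mem_setOf_eq, Set.mem_compl_iff]
        tauto
    rw [this]
    exact (key c).union measurableSet_Ioo.compl
  · have : (Set.Ioo a b).indicator f ⁻¹' Set.Ioi c
        = {y | y ∈ Set.Ioo a b ∧ c < f y} := by
      ext y
      by_cases hy : y ∈ Set.Ioo a b
      · simp only [Set.indicator_of_mem hy, Set.mem_preimage, Set.mem_Ioi,
          Set.mem_setOf_eq]
        tauto
      · simp only [Set.indicator_of_notMem hy, Set.mem_preimage, Set.mem_Ioi,
          Set.mem_setOf_eq]
        constructor
        · intro h; exact absurd h (not_lt.mpr (not_lt.mp hc))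
        · rintro ⟨h1, h2⟩; exact absurd h1 hy
    rw [this]
    exact key c



lemma flow_locInt (y C : ℝ) (gc : ℝ → ℝ) (A : ℝ → ℝ → ℝ)
    (heq : ∀ t : ℝ, 0 ≤ t → A t y = y + ∫ u in (0:ℝ)..t, gc (A u y))
    (hC : ∀ u : ℝ, 0 ≤ u → |gc (A u y)| ≤ C) :
    ∀ t : ℝ, 0 ≤ t → IntegrableOn (fun u => gc (A u y)) (Set.Ioc 0 t) volume := by
  by_contra hcon
  push_neg at hcon
  obtain ⟨t₀, ht₀0, hni⟩ := hcon
  set S : Set ℝ :=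
    {t | 0 ≤ t ∧ ¬ IntegrableOn (fun u => gc (A u y)) (Set.Ioc 0 t) volume} with hSdef
  have hS0 : t₀ ∈ S := ⟨ht₀0, hni⟩
  have hSne : S.Nonempty := ⟨t₀, hS0⟩
  have hbdd : BddBelow S := ⟨0, fun s hs => hs.1⟩
  have hup : ∀ s ∈ S, ∀ t, s ≤ t → t ∈ S := by
    rintro s ⟨hs0, hsni⟩ t hst
    exact ⟨hs0.trans hst, fun h => hsni (h.mono_set (Set.Ioc_subset_Ioc_right hst))⟩
  set T := sInf S with hT
  have hT0 : 0 ≤ T := le_csInf hSne fun s hs => hs.1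
  have hbad : ∀ t, T < t → t ∈ S := by
    intro t ht
    obtain ⟨s, hsS, hst⟩ := (csInf_lt_iff hbdd hSne).mp ht
    exact hup s hsS t hst.le
  have hAx : ∀ t, T < t → A t y = y := by
    intro t ht
    have h0t : (0:ℝ) ≤ t := hT0.trans ht.le
    have hni' : ¬ Integrable (fun u => gc (A u y)) (volume.restrict (Set.Ioc 0 t)) :=
      (hbad t ht).2
    rw [heq t h0t, intervalIntegral.integral_of_le h0t, integral_undef hni', add_zero]
  have hIT : IntegrableOn (fun u => gc (A u y)) (Set.Ioc 0 T) volume := by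
    rcases eq_or_lt_of_le hT0 with h0 | h0
    · rw [← h0, Set.Ioc_self]
      exact integrableOn_empty
    · have hgood : ∀ s, 0 ≤ s → s < T →
          IntegrableOn (fun u => gc (A u y)) (Set.Ioc 0 s) volume := by
        intro s hs0 hsT
        by_contra hni'
        exact absurd (csInf_le hbdd ⟨hs0, hni'⟩) (not_le.mpr hsT)
      have hcover : Set.Ioo (0:ℝ) T = ⋃ n : ℕ, Set.Ioc (0:ℝ) (T - T / (n+2)) := by
        ext u
        simp only [Set.mem_Ioo, Set.mem_iUnion, Set.mem_Ioc]
        constructor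
        · rintro ⟨hu0, huT⟩
          obtain ⟨n, hn⟩ := exists_nat_ge (T / (T - u))
          refine ⟨n, hu0, ?_⟩
          have hTu : 0 < T - u := by linarith
          have h1 : T / (T - u) ≤ (n:ℝ) + 2 := hn.trans (by linarith)
          have h2 : T ≤ ((n:ℝ) + 2) * (T - u) := by
            rw [div_le_iff₀ hTu] at h1; linarith
          have h3 : T / ((n:ℝ) + 2) ≤ T - u := by
            rw [div_le_iff₀ (by positivity)]; linarith
          linarith
        · rintro ⟨n, hu0, hun⟩
          have : 0 < T / ((n:ℝ)+2) := by positivity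
          exact ⟨hu0, by linarith⟩
      have hmeas : AEStronglyMeasurable (fun u => gc (A u y))
          (volume.restrict (Set.Ioo 0 T)) := by
        rw [hcover, aestronglyMeasurable_iUnion_iff]
        intro n
        have h2T : 0 < ((n:ℝ)+2) := by positivity
        have hle : T / ((n:ℝ)+2) ≤ T := by
          rw [div_le_iff₀ h2T]; nlinarith
        have hlt : 0 < T / ((n:ℝ)+2) := by positivity
        exact (hgood (T - T/((n:ℝ)+2)) (by linarith) (by linarith)).1
      have hint : IntegrableOn (fun u => gc (A u y)) (Set.Ioo 0 T) volume := by
        refine Integrable.mono' (g := fun _ => C) ?_ hmeas ?_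
        · exact (integrableOn_const_iff).mpr (Or.inr measure_Ioo_lt_top)
        · refine (ae_restrict_iff' measurableSet_Ioo).mpr (ae_of_all _ ?_)
          intro u hu
          exact hC u hu.1.le
      have hre : volume.restrict (Set.Ioc (0:ℝ) T) = volume.restrict (Set.Ioo 0 T) :=
        (Measure.restrict_congr_set Ioo_ae_eq_Ioc).symm
      unfold IntegrableOn
      rw [hre]
      exact hint
  have hI2 : IntegrableOn (fun u => gc (A u y)) (Set.Ioc T (T+1)) volume := by
    have heqc : Set.EqOn (fun _ => gc (A (T+1) y)) (fun u => gc (A u y))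
        (Set.Ioc T (T+1)) := by
      intro u hu
      simp only
      rw [hAx u hu.1, hAx (T+1) (by linarith)]
    exact ((integrableOn_const_iff).mpr (Or.inr measure_Ioc_lt_top)).congr_fun heqc measurableSet_Ioc
  have hI3 : IntegrableOn (fun u => gc (A u y)) (Set.Ioc 0 (T+1)) volume := by
    have hu : Set.Ioc (0:ℝ) T ∪ Set.Ioc T (T+1) = Set.Ioc 0 (T+1) :=
      Set.Ioc_union_Ioc_eq_Ioc hT0 (by linarith)
    rw [← hu]
    exact hIT.union hI2
  exact (hbad (T+1) (by linarith)).2 hI3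



lemma flow_II (y C : ℝ) (gc : ℝ → ℝ) (A : ℝ → ℝ → ℝ)
    (heq : ∀ t : ℝ, 0 ≤ t → A t y = y + ∫ u in (0:ℝ)..t, gc (A u y))
    (hC : ∀ u : ℝ, 0 ≤ u → |gc (A u y)| ≤ C) :
    ∀ s t : ℝ, 0 ≤ s → 0 ≤ t → IntervalIntegrable (fun u => gc (A u y)) volume s t := by
  intro s t hs ht
  rw [intervalIntegrable_iff]
  exact (flow_locInt y C gc A heq hC (max s t) (le_max_iff.mpr (Or.inl hs))).mono_set
    (fun u hu => ⟨lt_of_le_of_lt (le_min hs ht) hu.1, hu.2⟩)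

lemma flow_sub (y C : ℝ) (gc : ℝ → ℝ) (A : ℝ → ℝ → ℝ)
    (heq : ∀ t : ℝ, 0 ≤ t → A t y = y + ∫ u in (0:ℝ)..t, gc (A u y))
    (hC : ∀ u : ℝ, 0 ≤ u → |gc (A u y)| ≤ C) :
    ∀ s t : ℝ, 0 ≤ s → s ≤ t → A t y - A s y = ∫ u in s..t, gc (A u y) := by
  intro s t hs hst
  rw [heq t (hs.trans hst), heq s hs]
  have h1 := flow_II y C gc A heq hC 0 t le_rfl (hs.trans hst)
  have h2 := flow_II y C gc A heq hC 0 s le_rfl hs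
  rw [add_sub_add_left_eq_sub]
  exact intervalIntegral.integral_interval_sub_left h1 h2

lemma flow_mono_t (y C : ℝ) (gc : ℝ → ℝ) (A : ℝ → ℝ → ℝ)
    (heq : ∀ t : ℝ, 0 ≤ t → A t y = y + ∫ u in (0:ℝ)..t, gc (A u y))
    (hC : ∀ u : ℝ, 0 ≤ u → |gc (A u y)| ≤ C)
    (hnn : ∀ u : ℝ, 0 ≤ u → 0 ≤ gc (A u y)) :
    ∀ s t : ℝ, 0 ≤ s → s ≤ t → A s y ≤ A t y := by
  intro s t hs hst
  have h := flow_sub y C gc A heq hC s t hs hst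
  have : 0 ≤ ∫ u in s..t, gc (A u y) :=
    intervalIntegral.integral_nonneg hst (fun u hu => hnn u (hs.trans hu.1))
  linarith

lemma flow_cont (y C : ℝ) (hC0 : 0 ≤ C) (gc : ℝ → ℝ) (A : ℝ → ℝ → ℝ)
    (heq : ∀ t : ℝ, 0 ≤ t → A t y = y + ∫ u in (0:ℝ)..t, gc (A u y))
    (hC : ∀ u : ℝ, 0 ≤ u → |gc (A u y)| ≤ C) :
    Continuous (fun t : ℝ => A (max t 0) y) := by
  have hdist : ∀ s t : ℝ, 0 ≤ s → s ≤ t → |A t y - A s y| ≤ C * (t - s) := by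
    intro s t hs hst
    rw [flow_sub y C gc A heq hC s t hs hst]
    have := intervalIntegral.norm_integral_le_of_norm_le_const
      (f := fun u => gc (A u y)) (a := s) (b := t) (C := C) ?_
    · rwa [Real.norm_eq_abs, abs_of_nonneg (by linarith : (0:ℝ) ≤ t - s)] at this
    · intro u hu
      rw [Set.uIoc_of_le hst] at hu
      exact hC u (hs.trans hu.1.le)
  have key : ∀ s t : ℝ, |A (max t 0) y - A (max s 0) y| ≤ C * |t - s| := by
    intro s t
    rcases le_total (max s 0) (max t 0) with h | h
    · calc |A (max t 0) y - A (max s 0) y| ≤ C * (max t 0 - max s 0) :=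
            hdist _ _ (le_max_right s 0) h
        _ ≤ C * |t - s| := by
            apply mul_le_mul_of_nonneg_left _ hC0
            have := abs_max_sub_max_le_abs t s 0
            rw [abs_of_nonneg (by linarith : (0:ℝ) ≤ max t 0 - max s 0)] at this
            exact this
    · rw [abs_sub_comm]
      calc |A (max s 0) y - A (max t 0) y| ≤ C * (max s 0 - max t 0) :=
            hdist _ _ (le_max_right t 0) h
        _ ≤ C * |t - s| := by
            apply mul_le_mul_of_nonneg_left _ hC0
            have := abs_max_sub_max_le_abs s t 0
            rw [abs_of_nonneg (by linarith : (0:ℝ) ≤ max s 0 - max t 0),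
              abs_sub_comm] at this
            exact this
  have : LipschitzWith C.toNNReal (fun t : ℝ => A (max t 0) y) := by
    rw [lipschitzWith_iff_dist_le_mul]
    intro a b
    rw [Real.dist_eq, Real.dist_eq]
    calc |A (max a 0) y - A (max b 0) y| ≤ C * |a - b| := key b a
      _ ≤ C.toNNReal * |a - b| := by
          apply mul_le_mul_of_nonneg_right _ (abs_nonneg _)
          exact (Real.coe_toNNReal C hC0).symm.le
  exact this.continuous



lemma flow_tau (M : ℝ) (hM : 0 < M) (g gc : ℝ → ℝ) (C : ℝ)
    (hg_cont : ContinuousOn g (Set.Icc 0 M))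
    (hg_pos : ∀ z ∈ Set.Ioo 0 M, 0 < g z) (hgM : g M = 0)
    (hgcg : ∀ z ∈ Set.Ioc 0 M, gc z = g z)
    (hgc_cont : Continuous gc) (hCg : ∀ z : ℝ, |gc z| ≤ C)
    (A : ℝ → ℝ → ℝ) (c w : ℝ) (hc : c ∈ Set.Ioo 0 M) (hw : w ∈ Set.Ioo 0 M)
    (hmem : ∀ t : ℝ, 0 ≤ t → A t w ∈ Set.Ioc 0 M)
    (heq : ∀ t : ℝ, 0 ≤ t → A t w = w + ∫ u in (0:ℝ)..t, g (A u w))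
    (t : ℝ) (ht : 0 ≤ t) (hlt : A t w < M) :
    (∫ z in c..(A t w), (g z)⁻¹) = (∫ z in c..w, (g z)⁻¹) + t := by
  have hC0 : 0 ≤ C := (abs_nonneg _).trans (hCg 0)
  have heq' : ∀ s : ℝ, 0 ≤ s → A s w = w + ∫ u in (0:ℝ)..s, gc (A u w) := by
    intro s hs
    rw [heq s hs]
    congr 1
    apply intervalIntegral.integral_congr
    intro u hu
    rw [Set.uIcc_of_le hs] at hu
    exact (hgcg _ (hmem u hu.1)).symm
  have hC' : ∀ u : ℝ, 0 ≤ u → |gc (A u w)| ≤ C := fun u _ => hCg _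
  have hgnn : ∀ z ∈ Set.Ioc 0 M, 0 ≤ g z := by
    intro z hz
    rcases eq_or_lt_of_le hz.2 with h | h
    · rw [h, hgM]
    · exact (hg_pos z ⟨hz.1, h⟩).le
  have hnn : ∀ u : ℝ, 0 ≤ u → 0 ≤ gc (A u w) := by
    intro u hu
    rw [hgcg _ (hmem u hu)]
    exact hgnn _ (hmem u hu)
  have hA0 : A 0 w = w := by
    have := heq 0 le_rfl
    simpa using this
  have hmono := flow_mono_t w C gc A heq' hC' hnn
  have hrange : ∀ s : ℝ, 0 ≤ s → s ≤ t → A s w ∈ Set.Ioo 0 M :=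
    fun s hs hst => ⟨(hmem s hs).1, lt_of_le_of_lt (hmono s t hs hst) hlt⟩
  have hginv_cont : ContinuousOn (fun z => (g z)⁻¹) (Set.Ioo 0 M) :=
    (hg_cont.mono Set.Ioo_subset_Icc_self).inv₀ (fun z hz => (hg_pos z hz).ne')
  set τ : ℝ → ℝ := fun z => ∫ r in c..z, (g r)⁻¹ with hτ
  have hτderiv : ∀ z ∈ Set.Ioo 0 M, HasDerivAt τ ((g z)⁻¹) z := by
    intro z hz
    apply intervalIntegral.integral_hasDerivAt_right
    · apply ContinuousOn.intervalIntegrable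
      apply hginv_cont.mono
      exact (Set.ordConnected_Ioo).uIcc_subset hc hz
    · exact (hginv_cont.stronglyMeasurableAtFilter isOpen_Ioo) z hz
    · exact hginv_cont.continuousAt (isOpen_Ioo.mem_nhds hz)
  have hτcont : ContinuousOn τ (Set.Ioo 0 M) :=
    fun z hz => ((hτderiv z hz).continuousAt).continuousWithinAt
  have hAcont : Continuous (fun s : ℝ => A (max s 0) w) :=
    flow_cont w C hC0 gc A heq' hC'
  set h2 : ℝ → ℝ := fun u => gc (A (max u 0) w) with hh2
  have hh2cont : Continuous h2 := hgc_cont.comp hAcont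
  have heq'' : ∀ s : ℝ, 0 ≤ s → A s w = w + ∫ u in (0:ℝ)..s, h2 u := by
    intro s hs
    rw [heq' s hs]
    congr 1
    apply intervalIntegral.integral_congr
    intro u hu
    rw [Set.uIcc_of_le hs] at hu
    simp only [hh2, max_eq_left hu.1]
  have hAderiv : ∀ s : ℝ, 0 < s → HasDerivAt (fun r => A r w) (gc (A s w)) s := by
    intro s hs
    have h1 : HasDerivAt (fun r : ℝ => w + ∫ u in (0:ℝ)..r, h2 u) (h2 s) s := by
      apply HasDerivAt.const_add
      apply intervalIntegral.integral_hasDerivAt_right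
        (hh2cont.intervalIntegrable 0 s)
        (hh2cont.stronglyMeasurable.stronglyMeasurableAtFilter)
        hh2cont.continuousAt
    have heqev : (fun r : ℝ => w + ∫ u in (0:ℝ)..r, h2 u) =ᶠ[nhds s] (fun r => A r w) := by
      filter_upwards [Ioi_mem_nhds hs] with r hr
      exact (heq'' r (le_of_lt hr)).symm
    have := h1.congr_of_eventuallyEq heqev.symm
    simpa [hh2, max_eq_left hs.le] using this
  set ψ : ℝ → ℝ := fun s => τ (A s w) with hψ
  have hψcont : ContinuousOn ψ (Set.Icc 0 t) := by
    apply hτcont.comp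
    · apply (hAcont.continuousOn (s := Set.Icc 0 t)).congr
      intro s hs
      simp only [max_eq_left hs.1]
    · exact fun s hs => hrange s hs.1 hs.2
  have hψderiv : ∀ s ∈ Set.Ioo 0 t, HasDerivWithinAt ψ 1 (Set.Ioi s) s := by
    intro s hs
    have hd := (hτderiv _ (hrange s hs.1.le hs.2.le)).comp s (hAderiv s hs.1)
    have hval : (g (A s w))⁻¹ * gc (A s w) = 1 := by
      rw [hgcg _ (hmem s hs.1.le)]
      exact inv_mul_cancel₀ (hg_pos _ (hrange s hs.1.le hs.2.le)).ne'
    rw [hval] at hd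
    exact hd.hasDerivWithinAt
  have hFTC := intervalIntegral.integral_eq_sub_of_hasDeriv_right_of_le ht hψcont hψderiv
    (intervalIntegrable_const (c := (1:ℝ)))
  simp only [intervalIntegral.integral_const, smul_eq_mul, mul_one, sub_zero] at hFTC
  have : ψ t - ψ 0 = t := by rw [← hFTC]
  have hψ0 : ψ 0 = τ w := by rw [hψ]; simp only [hA0]
  have : τ (A t w) = τ w + t := by
    rw [hψ] at this hψ0
    simp only at this hψ0
    rw [hψ0] at this
    linarith
  exact this

lemma flow_monoOn (M : ℝ) (hM : 0 < M) (g gc : ℝ → ℝ) (C : ℝ)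
    (hg_cont : ContinuousOn g (Set.Icc 0 M))
    (hg_pos : ∀ z ∈ Set.Ioo 0 M, 0 < g z) (hgM : g M = 0)
    (hgcg : ∀ z ∈ Set.Ioc 0 M, gc z = g z)
    (hgc_cont : Continuous gc) (hCg : ∀ z : ℝ, |gc z| ≤ C)
    (A : ℝ → ℝ → ℝ)
    (hA_mem : ∀ x ∈ Set.Ioo (0:ℝ) M, ∀ t : ℝ, 0 ≤ t → A t x ∈ Set.Ioc 0 M)
    (hA_eq : ∀ x ∈ Set.Ioo (0:ℝ) M, ∀ t : ℝ, 0 ≤ t →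
      A t x = x + ∫ u in (0:ℝ)..t, g (A u x))
    (t : ℝ) (ht : 0 ≤ t) : MonotoneOn (fun y => A t y) (Set.Ioo 0 M) := by
  have hC0 : 0 ≤ C := (abs_nonneg _).trans (hCg 0)
  have hgnn : ∀ z ∈ Set.Ioc 0 M, 0 ≤ g z := by
    intro z hz
    rcases eq_or_lt_of_le hz.2 with h | h
    · rw [h, hgM]
    · exact (hg_pos z ⟨hz.1, h⟩).le
  have heq' : ∀ w ∈ Set.Ioo (0:ℝ) M, ∀ s : ℝ, 0 ≤ s →
      A s w = w + ∫ u in (0:ℝ)..s, gc (A u w) := by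
    intro w hw s hs
    rw [hA_eq w hw s hs]
    congr 1
    apply intervalIntegral.integral_congr
    intro u hu
    rw [Set.uIcc_of_le hs] at hu
    exact (hgcg _ (hA_mem w hw u hu.1)).symm
  have hC' : ∀ w : ℝ, ∀ u : ℝ, 0 ≤ u → |gc (A u w)| ≤ C := fun w u _ => hCg _
  have hnn : ∀ w ∈ Set.Ioo (0:ℝ) M, ∀ u : ℝ, 0 ≤ u → 0 ≤ gc (A u w) := by
    intro w hw u hu
    rw [hgcg _ (hA_mem w hw u hu)]
    exact hgnn _ (hA_mem w hw u hu)
  intro x' hx' y' hy' hxy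
  simp only
  rcases eq_or_lt_of_le hxy with h | hlt
  · rw [h]
  by_contra hcon
  push_neg at hcon
  -- hcon : A t y' < A t x'
  have hA0x : A 0 x' = x' := by simpa using hA_eq x' hx' 0 le_rfl
  have hA0y : A 0 y' = y' := by simpa using hA_eq y' hy' 0 le_rfl
  have hmonoy := flow_mono_t y' C gc A (heq' y' hy') (hC' y') (hnn y' hy')
  have h_y_le : y' ≤ A t y' := by
    have := hmonoy 0 t le_rfl ht
    rwa [hA0y] at this
  have hAty_lt_M : A t y' < M := lt_of_lt_of_le hcon (hA_mem x' hx' t ht).2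
  -- IVT for flow of x'
  have hAxcont : ContinuousOn (fun s => A s x') (Set.Icc 0 t) := by
    apply ((flow_cont x' C hC0 gc A (heq' x' hx') (hC' x')).continuousOn
      (s := Set.Icc 0 t)).congr
    intro s hs
    simp only [max_eq_left hs.1]
  have hIVT : A t y' ∈ Set.Icc (A 0 x') (A t x') := by
    rw [hA0x]
    exact ⟨hxy.trans h_y_le, hcon.le⟩
  obtain ⟨s, hs, hsval'⟩ := intermediate_value_Icc ht hAxcont hIVT
  have hsval : A s x' = A t y' := hsval'
  -- apply flow_tau with base c = x'
  have htaux := flow_tau M hM g gc C hg_cont hg_pos hgM hgcg hgc_cont hCg A x' x' hx' hx'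
    (hA_mem x' hx') (hA_eq x' hx') s hs.1 (by rw [hsval]; exact hAty_lt_M)
  have htauy := flow_tau M hM g gc C hg_cont hg_pos hgM hgcg hgc_cont hCg A x' y' hx' hy'
    (hA_mem y' hy') (hA_eq y' hy') t ht hAty_lt_M
  rw [hsval] at htaux
  have htauxx : (∫ z in x'..x', (g z)⁻¹) = 0 := intervalIntegral.integral_same
  rw [htauxx, zero_add] at htaux
  -- so τ(A t y') = s and = τ(y') + t
  have hkey : (∫ z in x'..y', (g z)⁻¹) + t = s := by rw [← htauy, htaux]
  have hpos : 0 < ∫ z in x'..y', (g z)⁻¹ := by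
    apply intervalIntegral.intervalIntegral_pos_of_pos_on
    · apply ContinuousOn.intervalIntegrable
      apply ((hg_cont.mono Set.Ioo_subset_Icc_self).inv₀
        (fun z hz => (hg_pos z hz).ne')).mono
      exact (Set.ordConnected_Ioo).uIcc_subset hx' hy'
    · intro z hz
      have hzI : z ∈ Set.Ioo (0:ℝ) M := ⟨hx'.1.trans hz.1, hz.2.trans hy'.2⟩
      exact inv_pos.mpr (hg_pos z hzI)
    · exact hlt
  have : s ≤ t := hs.2
  linarith



lemma phi_all (D Cb : ℝ) (hD : 0 < D) (β : ℝ → ℝ) (hβc : Continuous β)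
    (hβnn : ∀ t, 0 ≤ β t) (hβle : ∀ t, β t ≤ Cb) :
    IntegrableOn (fun t => β t * Real.exp (-(D*t + ∫ u in (0:ℝ)..t, β u))) (Set.Ioi 0) volume ∧
    IntegrableOn (fun t => Real.exp (-(D*t + ∫ u in (0:ℝ)..t, β u))) (Set.Ioi 0) volume ∧
    D * ∫ t in Set.Ioi (0:ℝ), Real.exp (-(D*t + ∫ u in (0:ℝ)..t, β u))
      = 1 - ∫ t in Set.Ioi (0:ℝ), β t * Real.exp (-(D*t + ∫ u in (0:ℝ)..t, β u)) := by
  set Bf : ℝ → ℝ := fun t => ∫ u in (0:ℝ)..t, β u with hBf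
  have hBderiv : ∀ t : ℝ, HasDerivAt Bf (β t) t := fun t =>
    intervalIntegral.integral_hasDerivAt_right (hβc.intervalIntegrable 0 t)
      (hβc.stronglyMeasurable.stronglyMeasurableAtFilter) hβc.continuousAt
  have hBcont : Continuous Bf :=
    continuous_iff_continuousAt.mpr fun t => (hBderiv t).continuousAt
  have hBnn : ∀ t : ℝ, 0 ≤ t → 0 ≤ Bf t := fun t ht =>
    intervalIntegral.integral_nonneg ht fun u _ => hβnn u
  set φ : ℝ → ℝ := fun t => Real.exp (-(D*t + Bf t)) with hφ
  have hφcont : Continuous φ := by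
    apply Real.continuous_exp.comp
    exact ((continuous_const.mul continuous_id).add hBcont).neg
  have hφpos : ∀ t, 0 < φ t := fun t => Real.exp_pos _
  have hφle : ∀ t : ℝ, 0 ≤ t → φ t ≤ Real.exp (-(D*t)) := by
    intro t ht
    apply Real.exp_le_exp.mpr
    have := hBnn t ht
    linarith
  have hφderiv : ∀ t : ℝ, HasDerivAt φ (-(D + β t) * φ t) t := by
    intro t
    have h1 : HasDerivAt (fun t : ℝ => -(D*t + Bf t)) (-(D + β t)) t := by
      apply HasDerivAt.neg
      have : HasDerivAt (fun t : ℝ => D*t) D t := by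
        simpa using (hasDerivAt_id t).const_mul D
      exact this.add (hBderiv t)
    have h2 := h1.exp
    convert h2 using 1
    ring
  set F : ℝ → ℝ := fun t => (D + β t) * φ t with hF
  have hFcont : Continuous F := (continuous_const.add hβc).mul hφcont
  have hFint : IntegrableOn F (Set.Ioi 0) volume := by
    apply Integrable.mono' (g := fun t => (D + Cb) * Real.exp (-(D*t)))
    · have := (exp_neg_integrableOn_Ioi 0 hD).const_mul (D + Cb)
      apply this.congr
      refine ae_of_all _ fun t => ?_
      norm_num
    · exact (hFcont.aestronglyMeasurable).restrict
    · refine (ae_restrict_iff' measurableSet_Ioi).mpr (ae_of_all _ ?_)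
      intro t ht
      have h1 : 0 ≤ D + β t := by have := hβnn t; linarith
      rw [Real.norm_eq_abs, abs_of_nonneg (mul_nonneg h1 (hφpos t).le)]
      apply mul_le_mul (by have := hβle t; linarith) (hφle t (le_of_lt ht))
        (hφpos t).le (by have := hβle t; have := hβnn t; linarith)
  have hβφint : IntegrableOn (fun t => β t * φ t) (Set.Ioi 0) volume := by
    apply Integrable.mono' (g := F) hFint
    · exact ((hβc.mul hφcont).aestronglyMeasurable).restrict
    · refine ae_of_all _ fun t => ?_
      rw [Real.norm_eq_abs, abs_of_nonneg (mul_nonneg (hβnn t) (hφpos t).le), hF]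
      have h1 : 0 ≤ φ t := (hφpos t).le
      simp only
      nlinarith [hβnn t]
  have hφint : IntegrableOn φ (Set.Ioi 0) volume := by
    apply Integrable.mono' (g := fun t => Real.exp (-(D*t)))
      ?_ (hφcont.aestronglyMeasurable).restrict
    refine (ae_restrict_iff' measurableSet_Ioi).mpr (ae_of_all _ ?_)
    intro t ht
    · rw [Real.norm_eq_abs, abs_of_nonneg (hφpos t).le]
      exact hφle t ht.le
    · apply (exp_neg_integrableOn_Ioi 0 hD).congr
      refine ae_of_all _ fun t => ?_
      norm_num
  have hid : ∫ t in Set.Ioi (0:ℝ), F t = 1 := by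
    have hderiv : ∀ t ∈ Set.Ioi (0:ℝ), HasDerivAt (fun t => -φ t) (F t) t := by
      intro t _
      have h2 : HasDerivAt (fun t => -φ t) _ t := (hφderiv t).neg
      convert h2 using 1
      simp only [hF]
      ring
    have htend : Tendsto (fun t => -φ t) atTop (nhds 0) := by
      rw [← neg_zero]
      apply Tendsto.neg
      have h1 : Tendsto (fun t : ℝ => Real.exp (-(D*t))) atTop (nhds 0) := by
        apply Real.tendsto_exp_atBot.comp
        exact (tendsto_neg_atBot_iff.mpr (Tendsto.const_mul_atTop hD tendsto_id))
      apply squeeze_zero' (g := fun t : ℝ => Real.exp (-(D*t)))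
      · exact Eventually.of_forall fun t => (hφpos t).le
      · filter_upwards [Filter.eventually_ge_atTop (0:ℝ)] with t ht
        exact hφle t ht
      · exact h1
    have := integral_Ioi_of_hasDerivAt_of_tendsto
      ((hφcont.neg).continuousWithinAt) hderiv hFint htend
    rw [this]
    have hφ0 : φ 0 = 1 := by
      simp [hφ, hBf, intervalIntegral.integral_same]
    rw [Pi.neg_apply, hφ0]
    ring
  refine ⟨hβφint, hφint, ?_⟩
  have hsplit : ∫ t in Set.Ioi (0:ℝ), F t
      = D * (∫ t in Set.Ioi (0:ℝ), φ t) + ∫ t in Set.Ioi (0:ℝ), β t * φ t := by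
    rw [← integral_const_mul, ← integral_add (hφint.const_mul D) hβφint]
    apply integral_congr_ae
    refine ae_of_all _ fun t => ?_
    simp [hF]
    ring
  rw [hsplit] at hid
  linarith



noncomputable def kern (q : ℝ → ℝ → ℝ) (f : ℝ → ℝ) (z : ℝ) : ℝ :=
  ∫ α in Set.Ioc (0:ℝ) 1, q z α * f (α * z) * f ((1 - α) * z)

lemma aux_ae_Ioo : ∀ᵐ α ∂(volume.restrict (Set.Ioc (0:ℝ) 1)), α ∈ Set.Ioo (0:ℝ) 1 := by
  have h1 : ∀ᵐ α ∂(volume.restrict (Set.Ioc (0:ℝ) 1)), α ∈ Set.Ioc (0:ℝ) 1 :=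
    ae_restrict_mem measurableSet_Ioc
  have h2 : ∀ᵐ α : ℝ ∂volume, α ≠ 1 := by
    rw [ae_iff]
    have he : {α : ℝ | ¬ α ≠ 1} = {1} := by ext α; simp
    rw [he]
    exact measure_singleton 1
  filter_upwards [h1, ae_restrict_of_ae h2] with α hα hα1
  exact ⟨hα.1, lt_of_le_of_ne hα.2 hα1⟩

lemma mem_Ioo_scale {M z α : ℝ} (hz : z ∈ Set.Ioc 0 M) (hα : α ∈ Set.Ioo (0:ℝ) 1) :
    α * z ∈ Set.Ioo 0 M := by
  refine ⟨mul_pos hα.1 hz.1, ?_⟩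
  have : α * z < 1 * z := mul_lt_mul_of_pos_right hα.2 hz.1
  rw [one_mul] at this
  exact lt_of_lt_of_le this hz.2

lemma mem_Ioo_scale' {M z α : ℝ} (hz : z ∈ Set.Ioc 0 M) (hα : α ∈ Set.Ioo (0:ℝ) 1) :
    (1 - α) * z ∈ Set.Ioo 0 M :=
  mem_Ioo_scale hz ⟨by linarith [hα.2], by linarith [hα.1]⟩

lemma q_integrableOn {M : ℝ} {q : ℝ → ℝ → ℝ} (hq : IsDivisionKernel M q)
    {z : ℝ} (hz : z ∈ Set.Icc 0 M) :
    IntegrableOn (fun α => q z α) (Set.Ioc 0 1) volume := by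
  have h1 : (∫ α in (0:ℝ)..1, q z α) = 1 := hq.2.2.1 z hz
  by_contra hni
  have : ¬ IntervalIntegrable (fun α => q z α) volume 0 1 := by
    rw [intervalIntegrable_iff_integrableOn_Ioc_of_le zero_le_one]
    exact hni
  rw [intervalIntegral.integral_undef this] at h1
  norm_num at h1

lemma q_int_Ioc_eq_one {M : ℝ} {q : ℝ → ℝ → ℝ} (hq : IsDivisionKernel M q)
    {z : ℝ} (hz : z ∈ Set.Icc 0 M) :
    (∫ α in Set.Ioc (0:ℝ) 1, q z α) = 1 := by
  rw [← intervalIntegral.integral_of_le zero_le_one]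
  exact hq.2.2.1 z hz

lemma kern_integrand_meas {q : ℝ → ℝ → ℝ} (hqm : Measurable (Function.uncurry q))
    {f₀ : ℝ → ℝ} (hf₀ : Measurable f₀) (z : ℝ) :
    Measurable (fun α : ℝ => q z α * f₀ (α * z) * f₀ ((1 - α) * z)) := by
  have h1 : Measurable (fun α : ℝ => q z α) :=
    hqm.comp (measurable_prodMk_left)
  have h2 : Measurable (fun α : ℝ => f₀ (α * z)) :=
    hf₀.comp (measurable_id.mul_const z)
  have h3 : Measurable (fun α : ℝ => f₀ ((1 - α) * z)) :=
    hf₀.comp ((measurable_const.sub measurable_id).mul_const z)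
  exact (h1.mul h2).mul h3

lemma kern_int {M : ℝ} {q : ℝ → ℝ → ℝ} (hq : IsDivisionKernel M q)
    (hM : 0 < M) {f₀ : ℝ → ℝ} (hf₀ : Measurable f₀)
    (hf01 : ∀ w ∈ Set.Ioo (0:ℝ) M, 0 ≤ f₀ w ∧ f₀ w ≤ 1)
    {z : ℝ} (hz : z ∈ Set.Ioc 0 M) :
    IntegrableOn (fun α : ℝ => q z α * f₀ (α * z) * f₀ ((1 - α) * z))
      (Set.Ioc 0 1) volume := by
  have hzI : z ∈ Set.Icc (0:ℝ) M := ⟨hz.1.le, hz.2⟩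
  apply Integrable.mono' (q_integrableOn hq hzI)
  · exact ((kern_integrand_meas hq.1 hf₀ z).aestronglyMeasurable).restrict
  · filter_upwards [aux_ae_Ioo] with α hα
    have hqnn : 0 ≤ q z α := hq.2.1 z hzI α ⟨hα.1.le, hα.2.le⟩
    have h1 := hf01 _ (mem_Ioo_scale hz hα)
    have h2 := hf01 _ (mem_Ioo_scale' hz hα)
    have e0 : 0 ≤ q z α * f₀ (α*z) := mul_nonneg hqnn h1.1
    have e1 : q z α * f₀ (α*z) ≤ q z α := mul_le_of_le_one_right hqnn h1.2
    have e2 : q z α * f₀ (α*z) * f₀ ((1-α)*z) ≤ q z α * f₀ (α*z) :=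
      mul_le_of_le_one_right e0 h2.2
    rw [Real.norm_eq_abs, abs_of_nonneg (mul_nonneg e0 h2.1)]
    exact e2.trans e1

lemma kern_nonneg {M : ℝ} {q : ℝ → ℝ → ℝ} (hq : IsDivisionKernel M q)
    (hM : 0 < M) {f₀ : ℝ → ℝ}
    (hf01 : ∀ w ∈ Set.Ioo (0:ℝ) M, 0 ≤ f₀ w ∧ f₀ w ≤ 1)
    {z : ℝ} (hz : z ∈ Set.Ioc 0 M) : 0 ≤ kern q f₀ z := by
  have hzI : z ∈ Set.Icc (0:ℝ) M := ⟨hz.1.le, hz.2⟩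
  apply integral_nonneg_of_ae
  filter_upwards [aux_ae_Ioo] with α hα
  have hqnn : 0 ≤ q z α := hq.2.1 z hzI α ⟨hα.1.le, hα.2.le⟩
  have h1 := hf01 _ (mem_Ioo_scale hz hα)
  have h2 := hf01 _ (mem_Ioo_scale' hz hα)
  exact mul_nonneg (mul_nonneg hqnn h1.1) h2.1

lemma kern_le_one {M : ℝ} {q : ℝ → ℝ → ℝ} (hq : IsDivisionKernel M q)
    (hM : 0 < M) {f₀ : ℝ → ℝ} (hf₀ : Measurable f₀)
    (hf01 : ∀ w ∈ Set.Ioo (0:ℝ) M, 0 ≤ f₀ w ∧ f₀ w ≤ 1)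
    {z : ℝ} (hz : z ∈ Set.Ioc 0 M) : kern q f₀ z ≤ 1 := by
  have hzI : z ∈ Set.Icc (0:ℝ) M := ⟨hz.1.le, hz.2⟩
  rw [← q_int_Ioc_eq_one hq hzI]
  apply integral_mono_ae (kern_int hq hM hf₀ hf01 hz) (q_integrableOn hq hzI)
  filter_upwards [aux_ae_Ioo] with α hα
  have hqnn : 0 ≤ q z α := hq.2.1 z hzI α ⟨hα.1.le, hα.2.le⟩
  have h1 := hf01 _ (mem_Ioo_scale hz hα)
  have h2 := hf01 _ (mem_Ioo_scale' hz hα)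
  have e0 : 0 ≤ q z α * f₀ (α*z) := mul_nonneg hqnn h1.1
  have e1 : q z α * f₀ (α*z) ≤ q z α := mul_le_of_le_one_right hqnn h1.2
  have e2 : q z α * f₀ (α*z) * f₀ ((1-α)*z) ≤ q z α * f₀ (α*z) :=
    mul_le_of_le_one_right e0 h2.2
  exact e2.trans e1

lemma kern_mono {M : ℝ} {q : ℝ → ℝ → ℝ} (hq : IsDivisionKernel M q)
    (hM : 0 < M) {f₀ f₀' : ℝ → ℝ} (hf₀ : Measurable f₀) (hf₀' : Measurable f₀')
    (hf01 : ∀ w ∈ Set.Ioo (0:ℝ) M, 0 ≤ f₀ w ∧ f₀ w ≤ 1)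
    (hf01' : ∀ w ∈ Set.Ioo (0:ℝ) M, 0 ≤ f₀' w ∧ f₀' w ≤ 1)
    (hle : ∀ w ∈ Set.Ioo (0:ℝ) M, f₀ w ≤ f₀' w)
    {z : ℝ} (hz : z ∈ Set.Ioc 0 M) : kern q f₀ z ≤ kern q f₀' z := by
  have hzI : z ∈ Set.Icc (0:ℝ) M := ⟨hz.1.le, hz.2⟩
  apply integral_mono_ae (kern_int hq hM hf₀ hf01 hz) (kern_int hq hM hf₀' hf01' hz)
  filter_upwards [aux_ae_Ioo] with α hα
  have hqnn : 0 ≤ q z α := hq.2.1 z hzI α ⟨hα.1.le, hα.2.le⟩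
  have ha := mem_Ioo_scale hz hα
  have hb := mem_Ioo_scale' hz hα
  have h1 := hf01 _ ha; have h2 := hf01 _ hb
  have h1' := hf01' _ ha; have h2' := hf01' _ hb
  have hl1 := hle _ ha; have hl2 := hle _ hb
  exact mul_le_mul (mul_le_mul le_rfl hl1 h1.1 hqnn) hl2 h2.1
    (mul_nonneg hqnn h1'.1)

lemma kern_meas {q : ℝ → ℝ → ℝ} (hqm : Measurable (Function.uncurry q))
    {f₀ : ℝ → ℝ} (hf₀ : Measurable f₀) : Measurable (kern q f₀) := by
  have h : StronglyMeasurable fun p : ℝ × ℝ =>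
      q p.1 p.2 * f₀ (p.2 * p.1) * f₀ ((1 - p.2) * p.1) := by
    apply Measurable.stronglyMeasurable
    have h1 : Measurable fun p : ℝ × ℝ => q p.1 p.2 := hqm
    have h2 : Measurable fun p : ℝ × ℝ => f₀ (p.2 * p.1) :=
      hf₀.comp (measurable_snd.mul measurable_fst)
    have h3 : Measurable fun p : ℝ × ℝ => f₀ ((1 - p.2) * p.1) :=
      hf₀.comp ((measurable_const.sub measurable_snd).mul measurable_fst)
    exact (h1.mul h2).mul h3
  exact (h.integral_prod_right').measurable

lemma kern_congr {M : ℝ} {q : ℝ → ℝ → ℝ} {f f₀ : ℝ → ℝ}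
    (hff₀ : ∀ w ∈ Set.Ioo (0:ℝ) M, f w = f₀ w)
    {z : ℝ} (hz : z ∈ Set.Ioc 0 M) :
    (∫ α in (0:ℝ)..1, q z α * f (α * z) * f ((1 - α) * z)) = kern q f₀ z := by
  rw [intervalIntegral.integral_of_le zero_le_one]
  apply integral_congr_ae
  filter_upwards [aux_ae_Ioo] with α hα
  rw [hff₀ _ (mem_Ioo_scale hz hα), hff₀ _ (mem_Ioo_scale' hz hα)]




noncomputable def BB (bc : ℝ → ℝ) (uA : ℝ → ℝ → ℝ) (t y : ℝ) : ℝ :=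
  ∫ u in Set.Ioc (0:ℝ) t, bc (uA u y)

noncomputable def GG (D : ℝ) (bc : ℝ → ℝ) (uA : ℝ → ℝ → ℝ) (q : ℝ → ℝ → ℝ)
    (f₀ : ℝ → ℝ) (y : ℝ) : ℝ :=
  D * (∫ t in Set.Ioi (0:ℝ), Real.exp (-(D*t)) * Real.exp (-(BB bc uA t y)))
  + ∫ t in Set.Ioi (0:ℝ),
      bc (uA t y) * Real.exp (-(BB bc uA t y) - D*t) * kern q f₀ (uA t y)

lemma BB_meas {bc : ℝ → ℝ} (hbc : Continuous bc) {uA : ℝ → ℝ → ℝ}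
    (huA : Measurable (fun p : ℝ × ℝ => uA p.1 p.2)) :
    Measurable (fun p : ℝ × ℝ => BB bc uA p.1 p.2) := by
  set F : (ℝ × ℝ) × ℝ → ℝ :=
    fun r => if r.2 ∈ Set.Ioc (0:ℝ) r.1.1 then bc (uA r.2 r.1.2) else 0 with hFdef
  have hFmeas : Measurable F := by
    apply Measurable.ite
    · have : {r : (ℝ × ℝ) × ℝ | r.2 ∈ Set.Ioc (0:ℝ) r.1.1}
          = {r : (ℝ × ℝ) × ℝ | (0:ℝ) < r.2} ∩ {r : (ℝ × ℝ) × ℝ | r.2 ≤ r.1.1} := by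
        ext r; simp [Set.mem_Ioc, Set.mem_inter_iff, Set.mem_setOf_eq]
      rw [this]
      exact (measurableSet_lt measurable_const measurable_snd).inter
        (measurableSet_le measurable_snd (measurable_fst.fst))
    · exact (hbc.measurable.comp (huA.comp
        (measurable_snd.prodMk measurable_fst.snd)))
    · exact measurable_const
  have key : ∀ p : ℝ × ℝ, BB bc uA p.1 p.2 = ∫ u, F (p, u) := by
    intro p
    rw [BB, ← integral_indicator measurableSet_Ioc]
    congr 1
    funext u
    rw [Set.indicator_apply]
  simp only [key]
  exact (hFmeas.stronglyMeasurable.integral_prod_right').measurable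

lemma GG_meas {D : ℝ} {bc : ℝ → ℝ} (hbc : Continuous bc) {uA : ℝ → ℝ → ℝ}
    (huA : Measurable (fun p : ℝ × ℝ => uA p.1 p.2))
    {q : ℝ → ℝ → ℝ} (hqm : Measurable (Function.uncurry q))
    {f₀ : ℝ → ℝ} (hf₀ : Measurable f₀) :
    Measurable (GG D bc uA q f₀) := by
  have huA' : Measurable (fun p : ℝ × ℝ => uA p.2 p.1) := by
    have he : (fun p : ℝ × ℝ => uA p.2 p.1)
        = (fun p : ℝ × ℝ => uA p.1 p.2) ∘ Prod.swap := rfl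
    rw [he]; exact huA.comp measurable_swap
  have hBB' : Measurable (fun p : ℝ × ℝ => BB bc uA p.2 p.1) := by
    have he : (fun p : ℝ × ℝ => BB bc uA p.2 p.1)
        = (fun p : ℝ × ℝ => BB bc uA p.1 p.2) ∘ Prod.swap := rfl
    rw [he]; exact (BB_meas hbc huA).comp measurable_swap
  have h1 : Measurable (fun y : ℝ =>
      ∫ t in Set.Ioi (0:ℝ), Real.exp (-(D*t)) * Real.exp (-(BB bc uA t y))) := by
    have hFmeas : Measurable (fun p : ℝ × ℝ =>
        Set.indicator (Set.Ioi (0:ℝ))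
          (fun t => Real.exp (-(D*t)) * Real.exp (-(BB bc uA t p.1))) p.2) := by
      simp only [Set.indicator_apply]
      apply Measurable.ite
      · exact measurable_snd measurableSet_Ioi
      · apply Measurable.mul
        · exact (Real.continuous_exp.measurable).comp
            ((measurable_const.mul measurable_snd).neg)
        · exact (Real.continuous_exp.measurable).comp hBB'.neg
      · exact measurable_const
    have key : ∀ y : ℝ, (∫ t in Set.Ioi (0:ℝ),
        Real.exp (-(D*t)) * Real.exp (-(BB bc uA t y)))
        = ∫ t, Set.indicator (Set.Ioi (0:ℝ))
            (fun t => Real.exp (-(D*t)) * Real.exp (-(BB bc uA t y))) t := by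
      intro y
      rw [integral_indicator measurableSet_Ioi]
    simp only [key]
    exact (hFmeas.stronglyMeasurable.integral_prod_right').measurable
  have h2 : Measurable (fun y : ℝ =>
      ∫ t in Set.Ioi (0:ℝ),
        bc (uA t y) * Real.exp (-(BB bc uA t y) - D*t) * kern q f₀ (uA t y)) := by
    have hFmeas : Measurable (fun p : ℝ × ℝ =>
        Set.indicator (Set.Ioi (0:ℝ))
          (fun t => bc (uA t p.1) * Real.exp (-(BB bc uA t p.1) - D*t)
            * kern q f₀ (uA t p.1)) p.2) := by
      simp only [Set.indicator_apply]
      apply Measurable.ite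
      · exact measurable_snd measurableSet_Ioi
      · apply Measurable.mul
        · apply Measurable.mul
          · exact hbc.measurable.comp huA'
          · exact (Real.continuous_exp.measurable).comp
              (hBB'.neg.sub (measurable_const.mul measurable_snd))
        · exact (kern_meas hqm hf₀).comp huA'
      · exact measurable_const
    have key : ∀ y : ℝ, (∫ t in Set.Ioi (0:ℝ),
        bc (uA t y) * Real.exp (-(BB bc uA t y) - D*t) * kern q f₀ (uA t y))
        = ∫ t, Set.indicator (Set.Ioi (0:ℝ))
            (fun t => bc (uA t y) * Real.exp (-(BB bc uA t y) - D*t)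
              * kern q f₀ (uA t y)) t := by
      intro y
      rw [integral_indicator measurableSet_Ioi]
    simp only [key]
    exact (hFmeas.stronglyMeasurable.integral_prod_right').measurable
  exact (h1.const_mul D).add h2



lemma GG_eq_genRec (M : ℝ) (D : ℝ) (b bc : ℝ → ℝ) (A uA : ℝ → ℝ → ℝ)
    (q : ℝ → ℝ → ℝ) (f f₀ : ℝ → ℝ) (y : ℝ)
    (hbceq : ∀ z ∈ Set.Ioc (0:ℝ) M, bc z = b z)
    (huAeq : ∀ t : ℝ, 0 ≤ t → uA t y = A t y)
    (hmem : ∀ t : ℝ, 0 ≤ t → A t y ∈ Set.Ioc 0 M)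
    (hff₀ : ∀ w ∈ Set.Ioo (0:ℝ) M, f w = f₀ w) :
    genRec D b A q f y = GG D bc uA q f₀ y := by
  have hBeq : ∀ t : ℝ, 0 ≤ t → (∫ u in (0:ℝ)..t, b (A u y)) = BB bc uA t y := by
    intro t ht
    rw [intervalIntegral.integral_of_le ht, BB]
    apply setIntegral_congr_fun measurableSet_Ioc
    intro u hu
    simp only
    rw [huAeq u hu.1.le, hbceq _ (hmem u hu.1.le)]
  rw [genRec, GG]
  congr 1
  · congr 1
    apply setIntegral_congr_fun measurableSet_Ioi
    intro t ht
    show Real.exp (-(D*t)) * Real.exp (-(∫ u in (0:ℝ)..t, b (A u y)))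
      = Real.exp (-(D*t)) * Real.exp (-(BB bc uA t y))
    rw [hBeq t (le_of_lt ht)]
  · apply setIntegral_congr_fun measurableSet_Ioi
    intro t ht
    have ht' : (0:ℝ) ≤ t := le_of_lt ht
    show b (A t y) * Real.exp (-(∫ u in (0:ℝ)..t, b (A u y)) - D * t) *
        (∫ α in (0:ℝ)..1, q (A t y) α * f (α * A t y) * f ((1 - α) * A t y))
      = bc (uA t y) * Real.exp (-(BB bc uA t y) - D*t) * kern q f₀ (uA t y)
    rw [kern_congr hff₀ (hmem t ht'), hBeq t ht', huAeq t ht', hbceq _ (hmem t ht')]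



lemma main_step (M : ℝ) (hM : 0 < M) (q : ℝ → ℝ → ℝ) (hq : IsDivisionKernel M q)
    (b bc : ℝ → ℝ) (hbc_cont : Continuous bc) (hbc_nn : ∀ z, 0 ≤ bc z)
    (Cb : ℝ) (hbcle : ∀ z, bc z ≤ Cb)
    (hbceq : ∀ z ∈ Set.Ioc (0:ℝ) M, bc z = b z)
    (A : ℝ → ℝ → ℝ) (y : ℝ)
    (hmem : ∀ t : ℝ, 0 ≤ t → A t y ∈ Set.Ioc 0 M)
    (hAycont : Continuous (fun t : ℝ => A (max t 0) y))
    (D D' : ℝ) (hD : 0 < D) (hDD' : D ≤ D')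
    (f f' f₀ f₀' : ℝ → ℝ) (hf₀ : Measurable f₀) (hf₀' : Measurable f₀')
    (hff₀ : ∀ w ∈ Set.Ioo (0:ℝ) M, f w = f₀ w)
    (hff₀' : ∀ w ∈ Set.Ioo (0:ℝ) M, f' w = f₀' w)
    (hf01 : ∀ w ∈ Set.Ioo (0:ℝ) M, 0 ≤ f₀ w ∧ f₀ w ≤ 1)
    (hf01' : ∀ w ∈ Set.Ioo (0:ℝ) M, 0 ≤ f₀' w ∧ f₀' w ≤ 1)
    (hle : ∀ w ∈ Set.Ioo (0:ℝ) M, f₀ w ≤ f₀' w) :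
    0 ≤ genRec D b A q f y ∧ genRec D b A q f y ≤ genRec D' b A q f' y ∧
      genRec D' b A q f' y ≤ 1 := by
  have hD' : 0 < D' := lt_of_lt_of_le hD hDD'
  set Ay : ℝ → ℝ := fun t => A (max t 0) y with hAy
  have hmem' : ∀ t : ℝ, Ay t ∈ Set.Ioc 0 M := fun t => hmem _ (le_max_right t 0)
  set β : ℝ → ℝ := fun t => bc (Ay t) with hβ
  have hβc : Continuous β := hbc_cont.comp hAycont
  have hβnn : ∀ t, 0 ≤ β t := fun t => hbc_nn _
  have hβle : ∀ t, β t ≤ Cb := fun t => hbcle _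
  set φ : ℝ → ℝ → ℝ := fun E t => Real.exp (-(E*t + ∫ u in (0:ℝ)..t, β u)) with hφ
  have hφpos : ∀ E t, 0 < φ E t := fun E t => Real.exp_pos _
  set κ : ℝ → ℝ := fun t => kern q f₀ (Ay t) with hκ
  set κ' : ℝ → ℝ := fun t => kern q f₀' (Ay t) with hκ'
  have hκm : Measurable κ := (kern_meas hq.1 hf₀).comp hAycont.measurable
  have hκ'm : Measurable κ' := (kern_meas hq.1 hf₀').comp hAycont.measurable
  have hκnn : ∀ t, 0 ≤ κ t := fun t => kern_nonneg hq hM hf01 (hmem' t)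
  have hκle : ∀ t, κ t ≤ 1 := fun t => kern_le_one hq hM hf₀ hf01 (hmem' t)
  have hκ'nn : ∀ t, 0 ≤ κ' t := fun t => kern_nonneg hq hM hf01' (hmem' t)
  have hκ'le : ∀ t, κ' t ≤ 1 := fun t => kern_le_one hq hM hf₀' hf01' (hmem' t)
  have hκκ' : ∀ t, κ t ≤ κ' t := fun t =>
    kern_mono hq hM hf₀ hf₀' hf01 hf01' hle (hmem' t)
  -- rewrite genRec
  have hBeq : ∀ t : ℝ, 0 ≤ t → (∫ u in (0:ℝ)..t, b (A u y)) = ∫ u in (0:ℝ)..t, β u := by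
    intro t ht
    apply intervalIntegral.integral_congr
    intro u hu
    rw [Set.uIcc_of_le ht] at hu
    simp only [hβ, hAy, max_eq_left hu.1]
    exact (hbceq _ (hmem u hu.1)).symm
  have hrw : ∀ (E : ℝ) (h h₀ : ℝ → ℝ), (∀ w ∈ Set.Ioo (0:ℝ) M, h w = h₀ w) →
      genRec E b A q h y = E * (∫ t in Set.Ioi (0:ℝ), φ E t)
        + ∫ t in Set.Ioi (0:ℝ), β t * φ E t * kern q h₀ (Ay t) := by
    intro E h h₀ hhh
    rw [genRec]
    congr 1
    · congr 1
      apply setIntegral_congr_fun measurableSet_Ioi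
      intro t ht
      have ht' : (0:ℝ) ≤ t := le_of_lt ht
      show Real.exp (-(E*t)) * Real.exp (-(∫ u in (0:ℝ)..t, b (A u y))) = φ E t
      rw [hBeq t ht', ← Real.exp_add]
      simp only [hφ]
      congr 1
      ring
    · apply setIntegral_congr_fun measurableSet_Ioi
      intro t ht
      have ht' : (0:ℝ) ≤ t := le_of_lt ht
      have hAt : A t y = Ay t := by simp only [hAy, max_eq_left ht']
      show b (A t y) * Real.exp ((-(∫ u in (0:ℝ)..t, b (A u y))) - E * t) *
        (∫ α in (0:ℝ)..1, q (A t y) α * h (α * A t y) * h ((1 - α) * A t y))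
        = β t * φ E t * kern q h₀ (Ay t)
      rw [kern_congr hhh (hmem t ht'), hBeq t ht', hAt, ← hbceq _ (hmem' t)]
      have hee : Real.exp ((-(∫ u in (0:ℝ)..t, β u)) - E * t) = φ E t := by
        simp only [hφ]
        congr 1
        ring
      rw [hee]
  have hrwf := hrw D f f₀ hff₀
  have hrwf' := hrw D' f' f₀' hff₀'
  obtain ⟨hint1, hint2, hid⟩ := phi_all D Cb hD β hβc hβnn hβle
  obtain ⟨hint1', hint2', hid'⟩ := phi_all D' Cb hD' β hβc hβnn hβle
  -- integrability of β φ κ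
  have hβφm : ∀ E : ℝ, AEStronglyMeasurable (fun t => β t * φ E t)
      (volume.restrict (Set.Ioi 0)) := by
    intro E
    apply Continuous.aestronglyMeasurable ?_ |>.restrict
    apply hβc.mul
    apply Real.continuous_exp.comp
    apply Continuous.neg
    apply ((continuous_const.mul continuous_id).add ?_)
    exact intervalIntegral.continuous_primitive (fun a b => hβc.intervalIntegrable a b) 0
  have hintκ : ∀ (E : ℝ) (k : ℝ → ℝ), Measurable k → (∀ t, 0 ≤ k t) → (∀ t, k t ≤ 1) →
      IntegrableOn (fun t => β t * φ E t) (Set.Ioi 0) volume →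
      IntegrableOn (fun t => β t * φ E t * k t) (Set.Ioi 0) volume := by
    intro E k hkm hknn hkle hβφ
    apply Integrable.mono' hβφ
    · exact ((hβφm E).mul (hkm.aestronglyMeasurable.restrict))
    · refine ae_of_all _ fun t => ?_
      have h1 : 0 ≤ β t * φ E t := mul_nonneg (hβnn t) (hφpos E t).le
      rw [Real.norm_eq_abs, abs_of_nonneg (mul_nonneg h1 (hknn t))]
      exact mul_le_of_le_one_right h1 (hkle t)
  have hintκD := hintκ D κ hκm hκnn hκle hint1
  have hintκ'D' := hintκ D' κ' hκ'm hκ'nn hκ'le hint1'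
  have hintκ'D := hintκ D κ' hκ'm hκ'nn hκ'le hint1
  -- main inequality
  have hmono1 : ∫ t in Set.Ioi (0:ℝ), β t * φ D t * κ t
      ≤ ∫ t in Set.Ioi (0:ℝ), β t * φ D t * κ' t := by
    apply setIntegral_mono_on hintκD hintκ'D measurableSet_Ioi
    intro t _
    exact mul_le_mul_of_nonneg_left (hκκ' t) (mul_nonneg (hβnn t) (hφpos D t).le)
  have hsub : ∫ t in Set.Ioi (0:ℝ), (β t * φ D t - β t * φ D t * κ' t)
      ≥ ∫ t in Set.Ioi (0:ℝ), (β t * φ D' t - β t * φ D' t * κ' t) := by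
    apply setIntegral_mono_on (hint1'.sub hintκ'D') (hint1.sub hintκ'D) measurableSet_Ioi
    intro t ht
    show β t * φ D' t - β t * φ D' t * κ' t ≤ β t * φ D t - β t * φ D t * κ' t
    have hφφ : φ D' t ≤ φ D t := by
      apply Real.exp_le_exp.mpr
      have : D * t ≤ D' * t := mul_le_mul_of_nonneg_right hDD' (le_of_lt ht)
      linarith
    have h1 : 0 ≤ 1 - κ' t := by linarith [hκ'le t]
    have h2 : β t * φ D' t - β t * φ D' t * κ' t = β t * φ D' t * (1 - κ' t) := by ring
    have h3 : β t * φ D t - β t * φ D t * κ' t = β t * φ D t * (1 - κ' t) := by ring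
    rw [h2, h3]
    apply mul_le_mul_of_nonneg_right _ h1
    exact mul_le_mul_of_nonneg_left hφφ (hβnn t)
  have hineq : genRec D b A q f y ≤ genRec D' b A q f' y := by
    rw [hrwf, hrwf', hid, hid']
    have e1 : ∫ t in Set.Ioi (0:ℝ), (β t * φ D t - β t * φ D t * κ' t)
        = (∫ t in Set.Ioi (0:ℝ), β t * φ D t)
          - ∫ t in Set.Ioi (0:ℝ), β t * φ D t * κ' t := integral_sub hint1 hintκ'D
    have e2 : ∫ t in Set.Ioi (0:ℝ), (β t * φ D' t - β t * φ D' t * κ' t)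
        = (∫ t in Set.Ioi (0:ℝ), β t * φ D' t)
          - ∫ t in Set.Ioi (0:ℝ), β t * φ D' t * κ' t := integral_sub hint1' hintκ'D'
    rw [e1, e2] at hsub
    linarith
  have hnn : 0 ≤ genRec D b A q f y := by
    rw [hrwf]
    have h1 : 0 ≤ ∫ t in Set.Ioi (0:ℝ), φ D t :=
      setIntegral_nonneg measurableSet_Ioi fun t _ => (hφpos D t).le
    have h2 : 0 ≤ ∫ t in Set.Ioi (0:ℝ), β t * φ D t * κ t :=
      setIntegral_nonneg measurableSet_Ioi fun t _ =>
        mul_nonneg (mul_nonneg (hβnn t) (hφpos D t).le) (hκnn t)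
    positivity
  have hle1 : genRec D' b A q f' y ≤ 1 := by
    rw [hrwf', hid']
    have h1 : ∫ t in Set.Ioi (0:ℝ), β t * φ D' t * κ' t
        ≤ ∫ t in Set.Ioi (0:ℝ), β t * φ D' t := by
      apply setIntegral_mono_on hintκ'D' hint1' measurableSet_Ioi
      intro t _
      exact mul_le_of_le_one_right (mul_nonneg (hβnn t) (hφpos D' t).le) (hκ'le t)
    linarith
  exact ⟨hnn, hineq, hle1⟩


/-- Monotonicity of the extinction probability in the death rate: for `0 < D ≤ D'`,
`p^{S,D}_n(x) ≤ p^{S,D'}_n(x)` for every `n`, hence `p^{S,D}(x) ≤ p^{S,D'}(x)`. -/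
theorem statement9 (M : ℝ) (hM : 0 < M)
    (q : ℝ → ℝ → ℝ) (hq : IsDivisionKernel M q)
    (b g : ℝ → ℝ)
    (hb_cont : ContinuousOn b (Set.Icc 0 M))
    (hb_nonneg : ∀ x ∈ Set.Icc (0:ℝ) M, 0 ≤ b x)
    (hg_cont : ContinuousOn g (Set.Icc 0 M))
    (hg_diff : ContDiffOn ℝ 1 g (Set.Ioo 0 M))
    (hg0 : g 0 = 0) (hgM : g M = 0)
    (hg_pos : ∀ x ∈ Set.Ioo (0:ℝ) M, 0 < g x)
    (A : ℝ → ℝ → ℝ)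
    (hA_mem : ∀ x ∈ Set.Ioo (0:ℝ) M, ∀ t : ℝ, 0 ≤ t → A t x ∈ Set.Ioc 0 M)
    (hA_eq : ∀ x ∈ Set.Ioo (0:ℝ) M, ∀ t : ℝ, 0 ≤ t →
      A t x = x + ∫ u in (0:ℝ)..t, g (A u x))
    (D D' : ℝ) (hD : 0 < D) (hDD' : D ≤ D')
    (pD pD' : ℕ → ℝ → ℝ)
    (hpD0 : ∀ x : ℝ, pD 0 x = 0) (hpD'0 : ∀ x : ℝ, pD' 0 x = 0)
    (hrecD : ∀ n : ℕ, ∀ x ∈ Set.Ioo (0:ℝ) M, pD (n+1) x = genRec D b A q (pD n) x)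
    (hrecD' : ∀ n : ℕ, ∀ x ∈ Set.Ioo (0:ℝ) M, pD' (n+1) x = genRec D' b A q (pD' n) x)
    (x : ℝ) (hx : x ∈ Set.Ioo (0:ℝ) M)
    (LD LD' : ℝ)
    (hLD : Filter.Tendsto (fun n => pD n x) Filter.atTop (nhds LD))
    (hLD' : Filter.Tendsto (fun n => pD' n x) Filter.atTop (nhds LD')) :
    (∀ n : ℕ, pD n x ≤ pD' n x) ∧ LD ≤ LD' := by
  classical
  obtain ⟨Cb, hCbb⟩ := isCompact_Icc.exists_bound_of_continuousOn hb_cont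
  obtain ⟨Cg, hCgb⟩ := isCompact_Icc.exists_bound_of_continuousOn hg_cont
  set proj : ℝ → ℝ := fun z => min (max z 0) M with hproj
  have hprojcont : Continuous proj :=
    (continuous_id.max continuous_const).min continuous_const
  have hprojmem : ∀ z, proj z ∈ Set.Icc (0:ℝ) M :=
    fun z => ⟨le_min (le_max_right z 0) hM.le, min_le_right _ _⟩
  have hprojid : ∀ z ∈ Set.Icc (0:ℝ) M, proj z = z := by
    intro z hz
    simp only [hproj]
    rw [max_eq_left hz.1, min_eq_left hz.2]
  set bc : ℝ → ℝ := fun z => b (proj z) with hbc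
  set gc : ℝ → ℝ := fun z => g (proj z) with hgc
  have hbccont : Continuous bc := hb_cont.comp_continuous hprojcont hprojmem
  have hgccont : Continuous gc := hg_cont.comp_continuous hprojcont hprojmem
  have hbcnn : ∀ z, 0 ≤ bc z := fun z => hb_nonneg _ (hprojmem z)
  have hbcle : ∀ z, bc z ≤ Cb := by
    intro z
    have h := hCbb _ (hprojmem z)
    rw [Real.norm_eq_abs] at h
    exact (le_abs_self _).trans h
  have hgcle : ∀ z, |gc z| ≤ Cg := by
    intro z
    have h := hCgb _ (hprojmem z)
    rwa [Real.norm_eq_abs] at h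
  have hCg0 : 0 ≤ Cg := (abs_nonneg _).trans (hgcle 0)
  have hbceq : ∀ z ∈ Set.Ioc (0:ℝ) M, bc z = b z := by
    intro z hz
    simp only [hbc]
    rw [hprojid z ⟨hz.1.le, hz.2⟩]
  have hgceq : ∀ z ∈ Set.Ioc (0:ℝ) M, gc z = g z := by
    intro z hz
    simp only [hgc]
    rw [hprojid z ⟨hz.1.le, hz.2⟩]
  have heqgc : ∀ y ∈ Set.Ioo (0:ℝ) M, ∀ s : ℝ, 0 ≤ s →
      A s y = y + ∫ u in (0:ℝ)..s, gc (A u y) := by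
    intro y hy s hs
    rw [hA_eq y hy s hs]
    congr 1
    apply intervalIntegral.integral_congr
    intro u hu
    rw [Set.uIcc_of_le hs] at hu
    exact (hgceq _ (hA_mem y hy u hu.1)).symm
  have hCy : ∀ y : ℝ, ∀ u : ℝ, 0 ≤ u → |gc (A u y)| ≤ Cg := fun y u _ => hgcle _
  have hAycont : ∀ y ∈ Set.Ioo (0:ℝ) M, Continuous (fun t : ℝ => A (max t 0) y) :=
    fun y hy => flow_cont y Cg hCg0 gc A (heqgc y hy) (hCy y)
  have hmonoA : ∀ t : ℝ, 0 ≤ t → MonotoneOn (fun y => A t y) (Set.Ioo 0 M) :=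
    fun t ht => flow_monoOn M hM g gc Cg hg_cont hg_pos hgM hgceq hgccont hgcle
      A hA_mem hA_eq t ht
  set uA : ℝ → ℝ → ℝ :=
    fun t y => if y ∈ Set.Ioo (0:ℝ) M then A (max t 0) y else M with huA
  have huAeq : ∀ y ∈ Set.Ioo (0:ℝ) M, ∀ t : ℝ, 0 ≤ t → uA t y = A t y := by
    intro y hy t ht
    simp only [huA, if_pos hy, max_eq_left ht]
  have huAm : Measurable (fun p : ℝ × ℝ => uA p.1 p.2) := by
    have hc : ∀ y : ℝ, Continuous fun t => uA t y := by
      intro y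
      by_cases hy : y ∈ Set.Ioo (0:ℝ) M
      · have he : (fun t => uA t y) = fun t => A (max t 0) y :=
          funext fun t => if_pos hy
        rw [he]
        exact hAycont y hy
      · have he : (fun t => uA t y) = fun _ => M := funext fun t => if_neg hy
        rw [he]
        exact continuous_const
    have hm : ∀ t : ℝ, Measurable (uA t) := by
      intro t
      have h1 : Measurable ((Set.Ioo (0:ℝ) M).indicator (fun y => A (max t 0) y)) :=
        meas_indicator_of_monotoneOn (hmonoA (max t 0) (le_max_right t 0))
      have h2 : Measurable (fun y : ℝ => ((Set.Ioo (0:ℝ) M)ᶜ).indicator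
          (fun _ => M) y) := measurable_const.indicator measurableSet_Ioo.compl
      have he : (uA t) = fun y =>
          (Set.Ioo (0:ℝ) M).indicator (fun y => A (max t 0) y) y
          + ((Set.Ioo (0:ℝ) M)ᶜ).indicator (fun _ => M) y := by
        funext y
        by_cases hy : y ∈ Set.Ioo (0:ℝ) M
        · rw [Set.indicator_of_mem hy, Set.indicator_of_notMem
            (Set.notMem_compl_iff.mpr hy), add_zero]
          simp only [huA, if_pos hy]
        · rw [Set.indicator_of_notMem hy, Set.indicator_of_mem (Set.mem_compl hy), zero_add]
          simp only [huA, if_neg hy]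
      rw [he]
      exact h1.add h2
    have h0 : Measurable (Function.uncurry uA) :=
      measurable_uncurry_of_continuous_of_measurable hc hm
    exact h0
  have main : ∀ n : ℕ,
      (∃ f₀ : ℝ → ℝ, Measurable f₀ ∧ ∀ w ∈ Set.Ioo (0:ℝ) M, pD n w = f₀ w) ∧
      (∃ f₀ : ℝ → ℝ, Measurable f₀ ∧ ∀ w ∈ Set.Ioo (0:ℝ) M, pD' n w = f₀ w) ∧
      (∀ w ∈ Set.Ioo (0:ℝ) M, 0 ≤ pD n w ∧ pD n w ≤ pD' n w ∧ pD' n w ≤ 1) := by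
    intro n
    induction n with
    | zero =>
      refine ⟨⟨fun _ => 0, measurable_const, fun w _ => hpD0 w⟩,
        ⟨fun _ => 0, measurable_const, fun w _ => hpD'0 w⟩, fun w _ => ?_⟩
      rw [hpD0 w, hpD'0 w]
      norm_num
    | succ n ih =>
      obtain ⟨⟨f₀, hf₀m, hf₀e⟩, ⟨f₀', hf₀'m, hf₀'e⟩, hbounds⟩ := ih
      have hf01 : ∀ w ∈ Set.Ioo (0:ℝ) M, 0 ≤ f₀ w ∧ f₀ w ≤ 1 := by
        intro w hw
        rw [← hf₀e w hw]
        obtain ⟨a1, a2, a3⟩ := hbounds w hw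
        exact ⟨a1, a2.trans a3⟩
      have hf01' : ∀ w ∈ Set.Ioo (0:ℝ) M, 0 ≤ f₀' w ∧ f₀' w ≤ 1 := by
        intro w hw
        rw [← hf₀'e w hw]
        obtain ⟨a1, a2, a3⟩ := hbounds w hw
        exact ⟨a1.trans a2, a3⟩
      have hlee : ∀ w ∈ Set.Ioo (0:ℝ) M, f₀ w ≤ f₀' w := by
        intro w hw
        rw [← hf₀e w hw, ← hf₀'e w hw]
        exact (hbounds w hw).2.1
      refine ⟨⟨GG D bc uA q f₀, GG_meas hbccont huAm hq.1 hf₀m, fun w hw => ?_⟩,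
        ⟨GG D' bc uA q f₀', GG_meas hbccont huAm hq.1 hf₀'m, fun w hw => ?_⟩,
        fun w hw => ?_⟩
      · rw [hrecD n w hw]
        exact GG_eq_genRec M D b bc A uA q (pD n) f₀ w hbceq (huAeq w hw)
          (hA_mem w hw) hf₀e
      · rw [hrecD' n w hw]
        exact GG_eq_genRec M D' b bc A uA q (pD' n) f₀' w hbceq (huAeq w hw)
          (hA_mem w hw) hf₀'e
      · have hms := main_step M hM q hq b bc hbccont hbcnn Cb hbcle hbceq A w
          (hA_mem w hw) (hAycont w hw) D D' hD hDD' (pD n) (pD' n) f₀ f₀' hf₀m hf₀'m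
          hf₀e hf₀'e hf01 hf01' hlee
        rw [hrecD n w hw, hrecD' n w hw]
        exact hms
  have hall : ∀ n : ℕ, pD n x ≤ pD' n x := fun n => ((main n).2.2 x hx).2.1
  exact ⟨hall, le_of_tendsto_of_tendsto' hLD hLD' hall⟩
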